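/- There exist γ₁, γ₂ in the field ℚ₇ of 7-adic numbers such that γ₁² + 13γ₁ + 49 = 0, γ₂² + 13γ₂ + 49 = 0, ‖γ₁‖ = 1 and ‖γ₂‖ = 7⁻²; that is, the polynomial t² + 13t + 49 splits over ℚ₇ with one root of 7-adic valuation 0 and one root of 7-adic valuation 2. -/

import Mathlib

instance : Fact (Nat.Prime 7) := ⟨by norm_num⟩

theorem elliptic_points_quadratic_splits_over_Q7 :
    ∃ γ₁ γ₂ : ℚ_[7],
      γ₁ ^ 2 + 13 * γ₁ + 49 = 0 ∧
      γ₂ ^ 2 + 13 * γ₂ + 49 = 0 ∧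
      ‖γ₁‖ = 1 ∧
      ‖γ₂‖ = (7 : ℝ) ^ (-2 : ℤ) := by
  set F : Polynomial ℤ_[7] := Polynomial.X ^ 2 + Polynomial.C 13 * Polynomial.X + Polynomial.C 49 with hF
  have heval : F.eval 1 = 63 := by simp [hF]; norm_num
  have hderiv : F.derivative.eval 1 = 15 := by simp [hF]; norm_num
  have h15 : ‖(15 : ℤ_[7])‖ = 1 := by
    refine le_antisymm (PadicInt.norm_le_one _) (not_lt.mp ?_)
    have := (PadicInt.norm_int_lt_one_iff_dvd (p := 7) 15).not
    simp only [show ((15:ℤ):ℤ_[7]) = 15 by norm_num] at this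
    exact this.mpr (by decide)
  have h63 : ‖(63 : ℤ_[7])‖ < 1 := by
    have := (PadicInt.norm_int_lt_one_iff_dvd (p := 7) 63)
    simp only [show ((63:ℤ):ℤ_[7]) = 63 by norm_num] at this
    exact this.mpr (by decide)
  have hnorm : ‖F.eval 1‖ < ‖F.derivative.eval 1‖ ^ 2 := by
    rw [heval, hderiv, h15]; simpa using h63
  obtain ⟨z, hz, hdist, -, -⟩ := hensels_lemma hnorm
  rw [Polynomial.coe_aeval_eq_eval, hderiv, h15] at hdist
  have hz0 : z ^ 2 + 13 * z + 49 = 0 := by simpa [hF] using hz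
  have hzeq : (z : ℚ_[7]) ^ 2 + 13 * (z : ℚ_[7]) + 49 = 0 := by
    exact_mod_cast congrArg (fun w : ℤ_[7] => (w : ℚ_[7])) hz0
  have hz1 : ‖z‖ = 1 := by
    refine le_antisymm (PadicInt.norm_le_one _) ?_
    have h := PadicInt.nonarchimedean z (1 - z)
    rw [add_sub_cancel, norm_one] at h
    rcases le_max_iff.mp h with h' | h'
    · exact h'
    · rw [norm_sub_rev] at h'; linarith
  have hznorm : ‖(z : ℚ_[7])‖ = 1 := by rw [← PadicInt.norm_def]; exact hz1
  refine ⟨(z : ℚ_[7]), -13 - z, hzeq, by linear_combination hzeq, hznorm, ?_⟩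
  have hmul : (z : ℚ_[7]) * (-13 - z) = 49 := by linear_combination -hzeq
  have hprod : ‖(z : ℚ_[7])‖ * ‖(-13 - (z : ℚ_[7]))‖ = ‖(49 : ℚ_[7])‖ := by
    rw [← norm_mul, hmul]
  have h49 : ‖(49 : ℚ_[7])‖ = (7:ℝ) ^ (-2 : ℤ) := by
    rw [show (49 : ℚ_[7]) = ((7:ℕ):ℚ_[7]) ^ 2 by norm_num, norm_pow, Padic.norm_p]
    rw [zpow_neg, ← zpow_natCast]
    norm_num
  rw [hznorm, one_mul] at hprod
  rw [hprod, h49]
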